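/- arXiv:1109.5829 — 4 statements merged into one kernel-verified Lean document; each statement's English description precedes it below -/
import Mathlib

section
/- Let m ≥ 0, t > 0, and define p_t(s) = (t e^{tm} / √(2π s³)) · exp(−(t²/s + m² s)/2) for s > 0. Then for every real number u with 2u + m² ≥ 0, one has ∫₀^∞ e^{−us} p_t(s) ds = exp(−t(√(2u + m²) − m)). In particular (taking u = 0) p_t is a probability density on (0,∞), and for every c with 2c < m² one has ∫₀^∞ e^{cs} p_t(s) ds = exp(t(m − √(m² − 2c))) < ∞. -/
open MeasureTheory Set
/-- The density of the relativistic `1/2`-stable subordinator with mass parameter `m`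
at time `t`, evaluated at `s > 0`:
`p_t(s) = (t e^{tm} / √(2π s³)) · exp(−(t²/s + m² s)/2)`. -/
noncomputable def relSubordinatorDensity (m t s : ℝ) : ℝ :=
  t * Real.exp (t * m) / Real.sqrt (2 * Real.pi * s ^ 3) *
    Real.exp (-(t ^ 2 / s + m ^ 2 * s) / 2)


noncomputable def phiRS (a t s : ℝ) : ℝ := a * Real.sqrt s - t / Real.sqrt s

noncomputable def phiRS' (a t s : ℝ) : ℝ := a / (2 * Real.sqrt s) + t / (2 * (s * Real.sqrt s))

lemma hasDerivAt_phiRS (a t : ℝ) {s : ℝ} (hs : 0 < s) :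
    HasDerivAt (phiRS a t) (phiRS' a t s) s := by
  have h0 : Real.sqrt s ≠ 0 := by positivity
  have h1 : HasDerivAt Real.sqrt (1 / (2 * Real.sqrt s)) s := Real.hasDerivAt_sqrt hs.ne'
  have h2 : HasDerivAt (fun x => a * Real.sqrt x) (a * (1 / (2 * Real.sqrt s))) s :=
    h1.const_mul a
  have h3 : HasDerivAt (fun x => t / Real.sqrt x)
      ((0 * Real.sqrt s - t * (1 / (2 * Real.sqrt s))) / (Real.sqrt s) ^ 2) s :=
    (hasDerivAt_const s t).div h1 h0
  have h4 := h2.sub h3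
  convert h4 using 1 <;> try rfl
  have hss : (Real.sqrt s) ^ 2 = s := Real.sq_sqrt hs.le
  unfold phiRS'
  field_simp
  rw [hss]; ring

lemma phiRS'_pos (a t : ℝ) (ha : 0 ≤ a) (ht : 0 < t) {s : ℝ} (hs : 0 < s) :
    0 < phiRS' a t s := by
  have h1 : 0 < Real.sqrt s := Real.sqrt_pos.2 hs
  have : 0 < t / (2 * (s * Real.sqrt s)) := by positivity
  have : 0 ≤ a / (2 * Real.sqrt s) := by positivity
  rw [phiRS']; linarith

lemma strictMonoOn_phiRS (a t : ℝ) (ha : 0 ≤ a) (ht : 0 < t) :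
    StrictMonoOn (phiRS a t) (Ioi 0) := by
  have hint : interior (Ioi (0:ℝ)) = Ioi 0 := interior_Ioi
  refine strictMonoOn_of_hasDerivWithinAt_pos (f' := phiRS' a t) (convex_Ioi 0) ?_ ?_ ?_
  · intro x hx
    exact ((hasDerivAt_phiRS a t hx).continuousAt).continuousWithinAt
  · intro x hx
    rw [hint] at hx ⊢
    exact (hasDerivAt_phiRS a t hx).hasDerivWithinAt
  · intro x hx
    rw [hint] at hx
    exact phiRS'_pos a t ha ht hx

lemma image_phiRS (a t : ℝ) (ha : 0 < a) (ht : 0 < t) :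
    phiRS a t '' (Ioi 0) = univ := by
  apply eq_univ_of_forall
  intro y
  set D := Real.sqrt (y ^ 2 + 4 * a * t) with hDdef
  have hD2 : D ^ 2 = y ^ 2 + 4 * a * t := Real.sq_sqrt (by nlinarith)
  have hDy : -y < D := by
    have h1 : |y| < D := by
      have := Real.sqrt_lt_sqrt (sq_nonneg y) (by nlinarith : y ^ 2 < y ^ 2 + 4 * a * t)
      rwa [Real.sqrt_sq_eq_abs] at this
    calc -y ≤ |y| := neg_le_abs y
    _ < D := h1
  set r := (y + D) / (2 * a) with hrdef
  have hr : 0 < r := by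
    apply div_pos _ (by linarith)
    linarith
  refine ⟨r ^ 2, mem_Ioi.2 (by positivity), ?_⟩
  have hsq : Real.sqrt (r ^ 2) = r := Real.sqrt_sq hr.le
  rw [phiRS, hsq]
  have key : a * r ^ 2 = y * r + t := by
    rw [hrdef]
    field_simp
    nlinarith [hD2]
  field_simp
  nlinarith [key]

lemma image_phiRS_zero (t : ℝ) (ht : 0 < t) :
    phiRS 0 t '' (Ioi 0) = Iio 0 := by
  ext y
  constructor
  · rintro ⟨s, hs, rfl⟩
    rw [mem_Ioi] at hs
    have : 0 < t / Real.sqrt s := by positivity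
    simp only [phiRS, zero_mul, zero_sub, mem_Iio]
    linarith
  · intro hy
    rw [mem_Iio] at hy
    refine ⟨t ^ 2 / y ^ 2, mem_Ioi.2 (div_pos (by positivity) (by nlinarith)), ?_⟩
    have h1 : Real.sqrt (t ^ 2 / y ^ 2) = t / (-y) := by
      rw [Real.sqrt_div (sq_nonneg t), Real.sqrt_sq ht.le, show y ^ 2 = (-y) ^ 2 by ring,
        Real.sqrt_sq (by linarith)]
    rw [phiRS, h1, zero_mul, zero_sub]
    field_simp

lemma cov_phiRS (a t : ℝ) (ha : 0 ≤ a) (ht : 0 < t) (g : ℝ → ℝ) :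
    ∫ x in phiRS a t '' (Ioi 0), g x
      = ∫ s in Ioi (0:ℝ), |phiRS' a t s| • g (phiRS a t s) := by
  apply integral_image_eq_integral_abs_deriv_smul measurableSet_Ioi
  · intro x hx
    exact (hasDerivAt_phiRS a t hx).hasDerivWithinAt
  · exact (strictMonoOn_phiRS a t ha ht).injOn

lemma cov_phiRS_int (a t : ℝ) (ha : 0 ≤ a) (ht : 0 < t) (g : ℝ → ℝ) :
    IntegrableOn g (phiRS a t '' (Ioi 0)) ↔
      IntegrableOn (fun s => |phiRS' a t s| • g (phiRS a t s)) (Ioi (0:ℝ)) := by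
  apply integrableOn_image_iff_integrableOn_abs_deriv_smul measurableSet_Ioi
  · intro x hx
    exact (hasDerivAt_phiRS a t hx).hasDerivWithinAt
  · exact (strictMonoOn_phiRS a t ha ht).injOn

lemma gaussE_integrable : Integrable (fun x : ℝ => Real.exp (-x ^ 2 / 2)) := by
  have h : ∀ x : ℝ, -x ^ 2 / 2 = -(1/2 : ℝ) * x ^ 2 := fun x => by ring
  simp_rw [h]
  exact integrable_exp_neg_mul_sq (by norm_num)

lemma gaussE_integral : ∫ x : ℝ, Real.exp (-x ^ 2 / 2) = Real.sqrt (2 * Real.pi) := by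
  have h : ∀ x : ℝ, -x ^ 2 / 2 = -(1/2 : ℝ) * x ^ 2 := fun x => by ring
  simp_rw [h, integral_gaussian]
  norm_num
  ring

lemma gaussE_integral_Iio :
    ∫ x in Iio (0:ℝ), Real.exp (-x ^ 2 / 2) = Real.sqrt (2 * Real.pi) / 2 := by
  have h2 := integral_comp_neg_Ioi 0 (fun x => Real.exp (-x ^ 2 / 2))
  simp only [neg_sq, neg_zero] at h2
  have h4 : ∫ x in Ioi (0:ℝ), Real.exp (-x ^ 2 / 2) = Real.sqrt (2 * Real.pi) / 2 := by
    have h : ∀ x : ℝ, -x ^ 2 / 2 = -(1/2 : ℝ) * x ^ 2 := fun x => by ring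
    simp_rw [h, integral_gaussian_Ioi]
    norm_num
    ring
  rw [← integral_Iic_eq_integral_Iio, ← h2, h4]

lemma A_integrable (a t : ℝ) (ha : 0 ≤ a) (ht : 0 < t) :
    IntegrableOn (fun s => phiRS' a t s * Real.exp (-(phiRS a t s) ^ 2 / 2)) (Ioi (0:ℝ)) := by
  have h := (cov_phiRS_int a t ha ht (fun x => Real.exp (-x ^ 2 / 2))).1
    gaussE_integrable.integrableOn
  refine h.congr_fun ?_ measurableSet_Ioi
  intro s hs
  simp only [smul_eq_mul, abs_of_pos (phiRS'_pos a t ha ht hs)]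

lemma abs_smul_eq (a t : ℝ) (ha : 0 ≤ a) (ht : 0 < t) :
    ∫ s in Ioi (0:ℝ), |phiRS' a t s| • Real.exp (-(phiRS a t s) ^ 2 / 2)
      = ∫ s in Ioi (0:ℝ), phiRS' a t s * Real.exp (-(phiRS a t s) ^ 2 / 2) := by
  apply setIntegral_congr_fun measurableSet_Ioi
  intro s hs
  simp only [smul_eq_mul, abs_of_pos (phiRS'_pos a t ha ht hs)]

lemma A_value (a t : ℝ) (ha : 0 < a) (ht : 0 < t) :
    ∫ s in Ioi (0:ℝ), phiRS' a t s * Real.exp (-(phiRS a t s) ^ 2 / 2)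
      = Real.sqrt (2 * Real.pi) := by
  have h := cov_phiRS a t ha.le ht (fun x => Real.exp (-x ^ 2 / 2))
  rw [image_phiRS a t ha ht, setIntegral_univ, gaussE_integral] at h
  rw [← abs_smul_eq a t ha.le ht, ← h]

lemma A_value_zero (t : ℝ) (ht : 0 < t) :
    ∫ s in Ioi (0:ℝ), phiRS' 0 t s * Real.exp (-(phiRS 0 t s) ^ 2 / 2)
      = Real.sqrt (2 * Real.pi) / 2 := by
  have h := cov_phiRS 0 t le_rfl ht (fun x => Real.exp (-x ^ 2 / 2))
  rw [image_phiRS_zero t ht, gaussE_integral_Iio] at h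
  rw [← abs_smul_eq 0 t le_rfl ht, ← h]

lemma B_eq (a t : ℝ) (ha : 0 < a) (ht : 0 < t) :
    ∫ s in Ioi (0:ℝ), a / Real.sqrt s * Real.exp (-(phiRS a t s) ^ 2 / 2)
      = ∫ s in Ioi (0:ℝ), t / (s * Real.sqrt s) * Real.exp (-(phiRS a t s) ^ 2 / 2) := by
  set ψ : ℝ → ℝ := fun s => t ^ 2 / a ^ 2 * s⁻¹ with hψ
  have hinv : ∀ s ∈ Ioi (0:ℝ), ψ (ψ s) = s := by
    intro s hs
    rw [mem_Ioi] at hs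
    simp only [hψ]; field_simp
  have hderiv : ∀ s ∈ Ioi (0:ℝ), HasDerivWithinAt ψ (t ^ 2 / a ^ 2 * (-(s ^ 2)⁻¹)) (Ioi 0) s := by
    intro s hs
    rw [mem_Ioi] at hs
    exact ((hasDerivAt_inv hs.ne').const_mul _).hasDerivWithinAt
  have hmaps : ∀ s ∈ Ioi (0:ℝ), ψ s ∈ Ioi (0:ℝ) := by
    intro s hs
    rw [mem_Ioi] at hs ⊢
    positivity
  have himage : ψ '' (Ioi 0) = Ioi 0 := by
    apply Subset.antisymm
    · rintro y ⟨s, hs, rfl⟩; exact hmaps s hs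
    · intro y hy; exact ⟨ψ y, hmaps y hy, hinv y hy⟩
  have hinj : InjOn ψ (Ioi 0) := by
    intro x hx y hy hxy
    have := congrArg ψ hxy
    rwa [hinv x hx, hinv y hy] at this
  have h := integral_image_eq_integral_abs_deriv_smul measurableSet_Ioi hderiv hinj
    (fun x => a / Real.sqrt x * Real.exp (-(phiRS a t x) ^ 2 / 2))
  rw [himage] at h
  rw [h]
  apply setIntegral_congr_fun measurableSet_Ioi
  intro s hs
  rw [mem_Ioi] at hs
  have h0 : Real.sqrt s ≠ 0 := by positivity
  have hss : Real.sqrt s * Real.sqrt s = s := Real.mul_self_sqrt hs.le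
  have h1 : ψ s = (t / (a * Real.sqrt s)) ^ 2 := by
    rw [hψ]
    field_simp
    nlinarith [hss]
  have hsq : Real.sqrt (ψ s) = t / (a * Real.sqrt s) := by
    rw [h1, Real.sqrt_sq (by positivity)]
  have h2 : phiRS a t (ψ s) = -(phiRS a t s) := by
    rw [phiRS, phiRS, hsq]
    field_simp
    nlinarith [hss]
  have h3 : |t ^ 2 / a ^ 2 * (-(s ^ 2)⁻¹)| = t ^ 2 / (a ^ 2 * s ^ 2) := by
    rw [abs_mul, abs_neg, abs_inv, abs_of_pos (by positivity : (0:ℝ) < t ^ 2 / a ^ 2),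
      abs_of_pos (by positivity : (0:ℝ) < s ^ 2)]
    field_simp
  simp only [smul_eq_mul, h3, h2, hsq, neg_sq]
  have h5 : t ^ 2 / (a ^ 2 * s ^ 2) * (a / (t / (a * Real.sqrt s))) = t / (s * Real.sqrt s) := by
    field_simp
    linear_combination hss
  rw [← mul_assoc, h5]

lemma contOn_E (a t : ℝ) :
    ContinuousOn (fun s => Real.exp (-(phiRS a t s) ^ 2 / 2)) (Ioi (0:ℝ)) := by
  apply Real.continuous_exp.comp_continuousOn
  apply ContinuousOn.div_const
  apply ContinuousOn.neg
  apply ContinuousOn.pow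
  unfold phiRS
  apply ContinuousOn.sub
  · exact continuousOn_const.mul Real.continuous_sqrt.continuousOn
  · exact continuousOn_const.div Real.continuous_sqrt.continuousOn
      (fun s hs => by have : (0:ℝ) < s := hs; positivity)

lemma I1_integrable (a t : ℝ) (ha : 0 ≤ a) (ht : 0 < t) :
    IntegrableOn (fun s => t / (s * Real.sqrt s) * Real.exp (-(phiRS a t s) ^ 2 / 2))
      (Ioi (0:ℝ)) := by
  have hA := (A_integrable a t ha ht).const_mul 2
  apply Integrable.mono' hA
  · apply ContinuousOn.aestronglyMeasurable ?_ measurableSet_Ioi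
    apply ContinuousOn.mul ?_ (contOn_E a t)
    exact continuousOn_const.div (continuousOn_id.mul Real.continuous_sqrt.continuousOn)
      (fun s hs => by have : (0:ℝ) < s := hs; positivity)
  · filter_upwards [ae_restrict_mem measurableSet_Ioi] with s hs
    have hs' : (0:ℝ) < s := hs
    have hE : 0 < Real.exp (-(phiRS a t s) ^ 2 / 2) := Real.exp_pos _
    have hsr : 0 < Real.sqrt s := Real.sqrt_pos.2 hs'
    rw [Real.norm_eq_abs, abs_of_nonneg (by positivity)]
    have hb : t / (s * Real.sqrt s) ≤ 2 * phiRS' a t s := by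
      rw [phiRS']
      have h1 : 0 ≤ a / (2 * Real.sqrt s) := by positivity
      have h2 : 2 * (t / (2 * (s * Real.sqrt s))) = t / (s * Real.sqrt s) := by ring
      linarith
    nlinarith [hb, hE]

lemma I2_integrable (a t : ℝ) (ha : 0 ≤ a) (ht : 0 < t) :
    IntegrableOn (fun s => a / Real.sqrt s * Real.exp (-(phiRS a t s) ^ 2 / 2))
      (Ioi (0:ℝ)) := by
  have hA := (A_integrable a t ha ht).const_mul 2
  apply Integrable.mono' hA
  · apply ContinuousOn.aestronglyMeasurable ?_ measurableSet_Ioi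
    apply ContinuousOn.mul ?_ (contOn_E a t)
    exact continuousOn_const.div Real.continuous_sqrt.continuousOn
      (fun s hs => by have : (0:ℝ) < s := hs; positivity)
  · filter_upwards [ae_restrict_mem measurableSet_Ioi] with s hs
    have hs' : (0:ℝ) < s := hs
    have hE : 0 < Real.exp (-(phiRS a t s) ^ 2 / 2) := Real.exp_pos _
    have hsr : 0 < Real.sqrt s := Real.sqrt_pos.2 hs'
    rw [Real.norm_eq_abs, abs_of_nonneg (by positivity)]
    have hb : a / Real.sqrt s ≤ 2 * phiRS' a t s := by
      rw [phiRS']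
      have h1 : 0 ≤ t / (2 * (s * Real.sqrt s)) := by positivity
      have h2 : 2 * (a / (2 * Real.sqrt s)) = a / Real.sqrt s := by ring
      linarith
    nlinarith [hb, hE]

lemma I1_value (a t : ℝ) (ha : 0 ≤ a) (ht : 0 < t) :
    ∫ s in Ioi (0:ℝ), t / (s * Real.sqrt s) * Real.exp (-(phiRS a t s) ^ 2 / 2)
      = Real.sqrt (2 * Real.pi) := by
  rcases ha.eq_or_lt with rfl | ha'
  · have h := A_value_zero t ht
    have hcong : ∫ s in Ioi (0:ℝ), phiRS' 0 t s * Real.exp (-(phiRS 0 t s) ^ 2 / 2)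
        = ∫ s in Ioi (0:ℝ),
            (1/2 : ℝ) * (t / (s * Real.sqrt s) * Real.exp (-(phiRS 0 t s) ^ 2 / 2)) := by
      apply setIntegral_congr_fun measurableSet_Ioi
      intro s hs
      have hs' : (0:ℝ) < s := hs
      simp only [phiRS']
      ring
    rw [hcong, integral_const_mul] at h
    linarith
  · have hadd := integral_add (I2_integrable a t ha ht) (I1_integrable a t ha ht)
    have hcong : ∫ s in Ioi (0:ℝ),
          (a / Real.sqrt s * Real.exp (-(phiRS a t s) ^ 2 / 2)
            + t / (s * Real.sqrt s) * Real.exp (-(phiRS a t s) ^ 2 / 2))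
        = ∫ s in Ioi (0:ℝ), (2:ℝ) * (phiRS' a t s * Real.exp (-(phiRS a t s) ^ 2 / 2)) := by
      apply setIntegral_congr_fun measurableSet_Ioi
      intro s hs
      have hs' : (0:ℝ) < s := hs
      simp only [phiRS']
      ring
    rw [hcong, integral_const_mul, A_value a t ha' ht] at hadd
    linarith [B_eq a t ha' ht]

lemma core_pointwise (a t : ℝ) (ht : 0 < t) {s : ℝ} (hs : 0 < s) :
    t / Real.sqrt (2 * Real.pi * s ^ 3) * Real.exp (-(t ^ 2 / s + a ^ 2 * s) / 2)
      = Real.exp (-(a * t)) / Real.sqrt (2 * Real.pi)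
          * (t / (s * Real.sqrt s) * Real.exp (-(phiRS a t s) ^ 2 / 2)) := by
  have h0 : Real.sqrt s ≠ 0 := by positivity
  have hss : (Real.sqrt s) ^ 2 = s := Real.sq_sqrt hs.le
  have hsqrt3 : Real.sqrt (2 * Real.pi * s ^ 3)
      = Real.sqrt (2 * Real.pi) * (s * Real.sqrt s) := by
    rw [Real.sqrt_mul (by positivity)]
    congr 1
    rw [show s ^ 3 = (s * Real.sqrt s) ^ 2 by nlinarith [hss], Real.sqrt_sq (by positivity)]
  have hexp : -(t ^ 2 / s + a ^ 2 * s) / 2 = -(phiRS a t s) ^ 2 / 2 + -(a * t) := by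
    rw [phiRS]
    field_simp
    linear_combination (a ^ 2 * s * Real.sqrt s ^ 2 - t ^ 2) * hss
  rw [hsqrt3, hexp, Real.exp_add]
  have hpi : Real.sqrt (2 * Real.pi) ≠ 0 := by positivity
  field_simp

lemma core_value (a t : ℝ) (ha : 0 ≤ a) (ht : 0 < t) :
    ∫ s in Ioi (0:ℝ), t / Real.sqrt (2 * Real.pi * s ^ 3)
        * Real.exp (-(t ^ 2 / s + a ^ 2 * s) / 2) = Real.exp (-(a * t)) := by
  rw [setIntegral_congr_fun measurableSet_Ioi
    (fun s hs => core_pointwise a t ht (mem_Ioi.1 hs)), integral_const_mul,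
    I1_value a t ha ht]
  have hpi : Real.sqrt (2 * Real.pi) ≠ 0 := by positivity
  field_simp

lemma core_integrable (a t : ℝ) (ha : 0 ≤ a) (ht : 0 < t) :
    IntegrableOn (fun s => t / Real.sqrt (2 * Real.pi * s ^ 3)
        * Real.exp (-(t ^ 2 / s + a ^ 2 * s) / 2)) (Ioi (0:ℝ)) := by
  have h := (I1_integrable a t ha ht).const_mul (Real.exp (-(a * t)) / Real.sqrt (2 * Real.pi))
  exact IntegrableOn.congr_fun h (fun s hs => (core_pointwise a t ht (mem_Ioi.1 hs)).symm) measurableSet_Ioi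

/-- Laplace transform of the relativistic `1/2`-stable subordinator density:
for `2u + m² ≥ 0`, `∫₀^∞ e^{−us} p_t(s) ds = exp(−t(√(2u+m²) − m))`; in particular
`p_t` is a probability density on `(0,∞)`, and for `2c < m²` one has
`∫₀^∞ e^{cs} p_t(s) ds = exp(t(m − √(m² − 2c))) < ∞`. -/
theorem laplace_transform_relSubordinatorDensity (m t : ℝ) (hm : 0 ≤ m) (ht : 0 < t) :
    (∀ u : ℝ, 0 ≤ 2 * u + m ^ 2 →
      ∫ s in Set.Ioi (0 : ℝ), Real.exp (-(u * s)) * relSubordinatorDensity m t s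
        = Real.exp (-(t * (Real.sqrt (2 * u + m ^ 2) - m)))) ∧
    (∫ s in Set.Ioi (0 : ℝ), relSubordinatorDensity m t s = 1) ∧
    (∀ c : ℝ, 2 * c < m ^ 2 →
      IntegrableOn (fun s => Real.exp (c * s) * relSubordinatorDensity m t s)
          (Set.Ioi (0 : ℝ)) ∧
      ∫ s in Set.Ioi (0 : ℝ), Real.exp (c * s) * relSubordinatorDensity m t s
        = Real.exp (t * (m - Real.sqrt (m ^ 2 - 2 * c)))) := by
  have first : ∀ u : ℝ, 0 ≤ 2 * u + m ^ 2 →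
      ∫ s in Set.Ioi (0 : ℝ), Real.exp (-(u * s)) * relSubordinatorDensity m t s
        = Real.exp (-(t * (Real.sqrt (2 * u + m ^ 2) - m))) := by
    intro u hu
    set a := Real.sqrt (2 * u + m ^ 2) with hadef
    have ha0 : 0 ≤ a := Real.sqrt_nonneg _
    have ha2 : a ^ 2 = 2 * u + m ^ 2 := Real.sq_sqrt hu
    have hpw : ∀ s ∈ Ioi (0:ℝ), Real.exp (-(u * s)) * relSubordinatorDensity m t s
        = Real.exp (t * m) * (t / Real.sqrt (2 * Real.pi * s ^ 3)
            * Real.exp (-(t ^ 2 / s + a ^ 2 * s) / 2)) := by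
      intro s hs
      simp only [relSubordinatorDensity]
      have hx : Real.exp (-(u * s)) * Real.exp (-(t ^ 2 / s + m ^ 2 * s) / 2)
          = Real.exp (-(t ^ 2 / s + a ^ 2 * s) / 2) := by
        rw [← Real.exp_add]
        congr 1
        rw [ha2]
        ring
      calc Real.exp (-(u * s)) * (t * Real.exp (t * m) / Real.sqrt (2 * Real.pi * s ^ 3)
            * Real.exp (-(t ^ 2 / s + m ^ 2 * s) / 2))
          = Real.exp (t * m) * (t / Real.sqrt (2 * Real.pi * s ^ 3)
              * (Real.exp (-(u * s)) * Real.exp (-(t ^ 2 / s + m ^ 2 * s) / 2))) := by ring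
        _ = _ := by rw [hx]
    rw [setIntegral_congr_fun measurableSet_Ioi hpw, integral_const_mul,
      core_value a t ha0 ht, ← Real.exp_add]
    congr 1
    ring
  refine ⟨first, ?_, ?_⟩
  · have key := first 0 (by positivity)
    simpa [Real.sqrt_sq hm] using key
  · intro c hc
    have h1 : 0 ≤ 2 * (-c) + m ^ 2 := by linarith
    have key := first (-c) h1
    have hs2 : Real.sqrt (2 * (-c) + m ^ 2) = Real.sqrt (m ^ 2 - 2 * c) := by
      congr 1
      ring
    have ha0 : 0 ≤ Real.sqrt (m ^ 2 - 2 * c) := Real.sqrt_nonneg _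
    have ha2 : (Real.sqrt (m ^ 2 - 2 * c)) ^ 2 = m ^ 2 - 2 * c :=
      Real.sq_sqrt (by linarith)
    simp only [neg_mul, neg_neg, hs2] at key
    constructor
    · set a := Real.sqrt (m ^ 2 - 2 * c)
      have h := (core_integrable a t ha0 ht).const_mul (Real.exp (t * m))
      apply IntegrableOn.congr_fun h ?_ measurableSet_Ioi
      intro s hs
      have hx : Real.exp (c * s) * Real.exp (-(t ^ 2 / s + m ^ 2 * s) / 2)
          = Real.exp (-(t ^ 2 / s + a ^ 2 * s) / 2) := by
        rw [← Real.exp_add]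
        congr 1
        rw [ha2]
        ring
      simp only [relSubordinatorDensity]
      calc Real.exp (t * m) * (t / Real.sqrt (2 * Real.pi * s ^ 3)
            * Real.exp (-(t ^ 2 / s + a ^ 2 * s) / 2))
          = Real.exp (t * m) * (t / Real.sqrt (2 * Real.pi * s ^ 3)
              * (Real.exp (c * s) * Real.exp (-(t ^ 2 / s + m ^ 2 * s) / 2))) := by rw [hx]
        _ = Real.exp (c * s) * (t * Real.exp (t * m) / Real.sqrt (2 * Real.pi * s ^ 3)
              * Real.exp (-(t ^ 2 / s + m ^ 2 * s) / 2)) := by ring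
    · rw [key]
      congr 1
      ring
end

section
/- Let m ≥ 0, t > 0, and define p_t(s) = (t e^{tm} / √(2π s³)) · exp(−(t²/s + m² s)/2) for s > 0, and for x ∈ ℝ³ set P_t(x) = ∫₀^∞ (2π s)^{−3/2} exp(−|x|²/(2s)) p_t(s) ds. Then for every ξ ∈ ℝ³, ∫_{ℝ³} e^{i ξ·x} P_t(x) dx = exp(−t(√(|ξ|² + m²) − m)). -/
open MeasureTheory
open scoped RealInnerProductSpace

/-- The density `P_t(x) = ∫₀^∞ (2πs)^{−3/2} e^{−|x|²/(2s)} p_t(s) ds` of the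
subordinated three-dimensional Gaussian. -/
noncomputable def subordinatedGaussianDensity (m t : ℝ) (x : EuclideanSpace ℝ (Fin 3)) : ℝ :=
  ∫ s in Set.Ioi (0 : ℝ),
    (2 * Real.pi * s) ^ (-(3 / 2 : ℝ)) * Real.exp (-‖x‖ ^ 2 / (2 * s)) *
      relSubordinatorDensity m t s

open Real Set


lemma phi_image {b : ℝ} (hb : 0 < b) : (fun x => x - b / x) '' Ioi 0 = univ := by
  apply eq_univ_of_forall
  intro y
  have h1 : |y| < Real.sqrt (y ^ 2 + 4 * b) := by
    rw [← Real.sqrt_sq_eq_abs]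
    exact Real.sqrt_lt_sqrt (sq_nonneg y) (by linarith)
  have hr : Real.sqrt (y ^ 2 + 4 * b) ^ 2 = y ^ 2 + 4 * b := Real.sq_sqrt (by positivity)
  set x := (y + Real.sqrt (y ^ 2 + 4 * b)) / 2 with hxdef
  have hx : 0 < x := by
    have := neg_abs_le y
    rw [hxdef]; nlinarith [abs_nonneg y]
  refine ⟨x, hx, ?_⟩
  have hx' : x ≠ 0 := ne_of_gt hx
  have hxx : x ^ 2 = y * x + b := by rw [hxdef]; linear_combination (1 / 4 : ℝ) * hr
  have hb' : b / x = x - y := by rw [div_eq_iff hx']; linear_combination hxx - hr / 2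
  simp only [hb']; ring

lemma phi_injOn {b : ℝ} (hb : 0 ≤ b) : InjOn (fun x => x - b / x) (Ioi 0) := by
  intro x hx y hy h
  simp only [mem_Ioi] at hx hy
  simp only at h
  have hx0 : x ≠ 0 := ne_of_gt hx
  have hy0 : y ≠ 0 := ne_of_gt hy
  have h2 : (x - b / x) * (x * y) = (y - b / y) * (x * y) := by rw [h]
  have key2 : (x - y) * (x * y + b) * (x * y) = 0 := by
    field_simp at h2
    linear_combination (x * y) * h2
  have hxy : x * y ≠ 0 := by positivity
  have key : (x - y) * (x * y + b) = 0 := by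
    rcases mul_eq_zero.mp key2 with h' | h'
    · exact h'
    · exact absurd h' hxy
  have hpos : 0 < x * y + b := by positivity
  rcases mul_eq_zero.mp key with h' | h'
  · linarith
  · linarith

lemma hasDeriv_phi {b x : ℝ} (hx : 0 < x) :
    HasDerivWithinAt (fun x => x - b / x) (1 + b / x ^ 2) (Ioi 0) x := by
  have h1 : HasDerivAt (fun x : ℝ => b / x) (-(b / x ^ 2)) x := by
    have := (hasDerivAt_inv (ne_of_gt hx)).const_mul b
    simp only [div_eq_mul_inv]
    convert this using 1
    all_goals first | rfl | ring
  have h : HasDerivAt (fun x => x - b / x) (1 + b / x ^ 2) x := by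
    exact ((hasDerivAt_id' x).sub h1).congr_deriv (by ring)
  exact h.hasDerivWithinAt

lemma gauss_fun_eq : (fun y : ℝ => Real.exp (-y ^ 2 / 2)) = fun y => Real.exp (-(1/2 : ℝ) * y ^ 2) := by
  funext y; congr 1; ring

lemma glasser_J {b : ℝ} (hb : 0 < b) :
    IntegrableOn (fun x => (1 + b / x ^ 2) * Real.exp (-(x - b / x) ^ 2 / 2)) (Ioi 0) ∧
    (∫ x in Ioi (0:ℝ), (1 + b / x ^ 2) * Real.exp (-(x - b / x) ^ 2 / 2)) = Real.sqrt (2 * π) := by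
  have hder : ∀ x ∈ Ioi (0:ℝ), HasDerivWithinAt (fun x => x - b / x) (1 + b / x ^ 2) (Ioi 0) x :=
    fun x hx => hasDeriv_phi hx
  have hinj := phi_injOn hb.le
  have himg := phi_image hb
  have hgauss : Integrable (fun y : ℝ => Real.exp (-y ^ 2 / 2)) := by
    rw [gauss_fun_eq]; exact integrable_exp_neg_mul_sq (by norm_num)
  have habs : ∀ x ∈ Ioi (0:ℝ),
      |1 + b / x ^ 2| • Real.exp (-(x - b / x) ^ 2 / 2)
        = (1 + b / x ^ 2) * Real.exp (-(x - b / x) ^ 2 / 2) := by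
    intro x hx
    have hx' : (0:ℝ) < x := hx
    rw [smul_eq_mul, abs_of_pos (by positivity)]
  constructor
  · have := (MeasureTheory.integrableOn_image_iff_integrableOn_abs_deriv_smul
      measurableSet_Ioi hder hinj (fun y => Real.exp (-y ^ 2 / 2))).mp
      (by rw [himg]; exact hgauss.integrableOn)
    exact this.congr_fun habs measurableSet_Ioi
  · have key := MeasureTheory.integral_image_eq_integral_abs_deriv_smul
      measurableSet_Ioi hder hinj (fun y => Real.exp (-y ^ 2 / 2))
    rw [himg, Measure.restrict_univ] at key
    rw [← setIntegral_congr_fun measurableSet_Ioi habs, ← key, gauss_fun_eq,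
      integral_gaussian]
    congr 1
    ring

lemma psi_image {b : ℝ} (hb : 0 < b) : (fun x => b / x) '' Ioi 0 = Ioi 0 := by
  ext y
  constructor
  · rintro ⟨x, hx, rfl⟩
    exact div_pos hb hx
  · intro hy
    exact ⟨b / y, div_pos hb hy, by field_simp⟩

lemma glasser_I {b : ℝ} (hb : 0 ≤ b) :
    IntegrableOn (fun x => Real.exp (-(x - b / x) ^ 2 / 2)) (Ioi 0) ∧
    (∫ x in Ioi (0:ℝ), Real.exp (-(x - b / x) ^ 2 / 2)) = Real.sqrt (2 * π) / 2 := by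
  rcases eq_or_lt_of_le hb with rfl | hb
  · simp only [zero_div, sub_zero]
    constructor
    · rw [gauss_fun_eq]
      exact (integrable_exp_neg_mul_sq (by norm_num)).integrableOn
    · rw [gauss_fun_eq, integral_gaussian_Ioi]
      congr 2
      ring
  · have hJ := glasser_J hb
    have hmeas : AEStronglyMeasurable (fun x => Real.exp (-(x - b / x) ^ 2 / 2))
        (volume.restrict (Ioi 0)) := by
      apply Measurable.aestronglyMeasurable
      fun_prop
    have he : IntegrableOn (fun x => Real.exp (-(x - b / x) ^ 2 / 2)) (Ioi 0) := by
      apply Integrable.mono' hJ.1 hmeas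
      filter_upwards [ae_restrict_mem measurableSet_Ioi] with x hx
      have hx' : (0:ℝ) < x := hx
      rw [Real.norm_eq_abs, abs_of_pos (Real.exp_pos _)]
      have h1 : (0:ℝ) ≤ b / x ^ 2 := by positivity
      nlinarith [Real.exp_pos (-(x - b / x) ^ 2 / 2)]
    refine ⟨he, ?_⟩
    have hderψ : ∀ x ∈ Ioi (0:ℝ), HasDerivWithinAt (fun x => b / x) (-(b / x ^ 2)) (Ioi 0) x := by
      intro x hx
      have hx' : (0:ℝ) < x := hx
      have := (hasDerivAt_inv (ne_of_gt hx')).const_mul b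
      have h : HasDerivAt (fun x : ℝ => b / x) (-(b / x ^ 2)) x := by
        simp only [div_eq_mul_inv]
        convert this using 1
        all_goals first | rfl | ring
      exact h.hasDerivWithinAt
    have hinjψ : InjOn (fun x => b / x) (Ioi 0) := by
      intro x hx y hy h
      simp only [mem_Ioi] at hx hy
      simp only at h
      field_simp at h
      exact h.symm
    have key := MeasureTheory.integral_image_eq_integral_abs_deriv_smul
      measurableSet_Ioi hderψ hinjψ (fun y => Real.exp (-(y - b / y) ^ 2 / 2))
    rw [psi_image hb] at key
    have hswap : (∫ x in Ioi (0:ℝ), Real.exp (-(x - b / x) ^ 2 / 2))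
        = ∫ x in Ioi (0:ℝ), (b / x ^ 2) * Real.exp (-(x - b / x) ^ 2 / 2) := by
      rw [key]
      apply setIntegral_congr_fun measurableSet_Ioi
      intro x hx
      have hx' : (0:ℝ) < x := hx
      have hbx : b / (b / x) = x := by field_simp
      have hsq : (b / x - b / (b / x)) ^ 2 = (x - b / x) ^ 2 := by rw [hbx]; ring
      simp only [smul_eq_mul]
      rw [abs_neg, abs_of_pos (by positivity : (0:ℝ) < b / x ^ 2), hsq]
    have hbe : IntegrableOn (fun x => (b / x ^ 2) * Real.exp (-(x - b / x) ^ 2 / 2)) (Ioi 0) := by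
      have hfe : (fun x => (b / x ^ 2) * Real.exp (-(x - b / x) ^ 2 / 2))
          = fun x => (1 + b / x ^ 2) * Real.exp (-(x - b / x) ^ 2 / 2)
            - Real.exp (-(x - b / x) ^ 2 / 2) := by
        funext x; ring
      rw [hfe]
      exact hJ.1.sub he
    have hsplit : (∫ x in Ioi (0:ℝ), (1 + b / x ^ 2) * Real.exp (-(x - b / x) ^ 2 / 2))
        = (∫ x in Ioi (0:ℝ), Real.exp (-(x - b / x) ^ 2 / 2))
          + ∫ x in Ioi (0:ℝ), (b / x ^ 2) * Real.exp (-(x - b / x) ^ 2 / 2) := by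
      rw [← integral_add he hbe]
      apply setIntegral_congr_fun measurableSet_Ioi
      intro x hx
      ring
    have := hJ.2
    rw [hsplit, ← hswap] at this
    linarith

lemma sub_image {t : ℝ} (ht : 0 < t) : (fun u => t ^ 2 / u ^ 2) '' Ioi 0 = Ioi 0 := by
  ext y
  constructor
  · rintro ⟨u, hu, rfl⟩
    have hu' : (0:ℝ) < u := hu
    simp only [mem_Ioi]
    positivity
  · intro hy
    have hy' : (0:ℝ) < y := hy
    refine ⟨t / Real.sqrt y, mem_Ioi.mpr (by positivity), ?_⟩
    have h1 : (t / Real.sqrt y) ^ 2 = t ^ 2 / y := by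
      rw [div_pow, Real.sq_sqrt hy'.le]
    simp only
    rw [h1]
    field_simp

lemma sub_deriv {t : ℝ} (ht : 0 < t) : ∀ u ∈ Ioi (0:ℝ),
    HasDerivWithinAt (fun u => t ^ 2 / u ^ 2) (-(2 * t ^ 2 / u ^ 3)) (Ioi 0) u := by
  intro u hu
  have hu' : (0:ℝ) < u := hu
  have h1 : HasDerivAt (fun u : ℝ => (u ^ 2)⁻¹) (-(2 * u) / (u ^ 2) ^ 2) u := by
    have := (hasDerivAt_pow 2 u).inv (by positivity)
    exact this.congr_deriv (by norm_num)
  have h2 : HasDerivAt (fun u : ℝ => t ^ 2 / u ^ 2) (-(2 * t ^ 2 / u ^ 3)) u := by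
    have := h1.const_mul (t ^ 2)
    simp only [div_eq_mul_inv]
    convert this using 1
    all_goals first | rfl | field_simp
  exact h2.hasDerivWithinAt

lemma sub_inj {t : ℝ} (ht : 0 < t) : InjOn (fun u => t ^ 2 / u ^ 2) (Ioi 0) := by
  intro u hu v hv h
  simp only [mem_Ioi] at hu hv
  simp only at h
  have hu0 : u ≠ 0 := ne_of_gt hu
  have hv0 : v ≠ 0 := ne_of_gt hv
  rw [div_eq_div_iff (by positivity) (by positivity)] at h
  have key : (u - v) * (u + v) = 0 := by
    have ht2 : (t:ℝ) ^ 2 ≠ 0 := by positivity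
    have h3 : u ^ 2 = v ^ 2 := by
      have := mul_left_cancel₀ ht2 (by linarith [h] : t ^ 2 * v ^ 2 = t ^ 2 * u ^ 2)
      linarith [this]
    linear_combination h3
  rcases mul_eq_zero.mp key with h' | h'
  · linarith
  · linarith

lemma laplace_subordinator {t c : ℝ} (ht : 0 < t) (hc : 0 ≤ c) :
    IntegrableOn (fun s => t / Real.sqrt (2 * π * s ^ 3) * Real.exp (-(t ^ 2 / s + c ^ 2 * s) / 2)) (Ioi 0) ∧
    (∫ s in Ioi (0:ℝ), t / Real.sqrt (2 * π * s ^ 3) * Real.exp (-(t ^ 2 / s + c ^ 2 * s) / 2))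
      = Real.exp (-(t * c)) := by
  set g : ℝ → ℝ := fun s => t / Real.sqrt (2 * π * s ^ 3) * Real.exp (-(t ^ 2 / s + c ^ 2 * s) / 2) with hg
  have hβ : (0:ℝ) ≤ t * c := by positivity
  have hI := glasser_I hβ
  have hsπ : (0:ℝ) < Real.sqrt (2 * π) := Real.sqrt_pos.mpr (by positivity)
  have hptw : ∀ u ∈ Ioi (0:ℝ),
      |(-(2 * t ^ 2 / u ^ 3))| • g (t ^ 2 / u ^ 2)
        = (2 / Real.sqrt (2 * π) * Real.exp (-(t * c))) * Real.exp (-(u - t * c / u) ^ 2 / 2) := by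
    intro u hu
    have hu' : (0:ℝ) < u := hu
    have hsqrt : Real.sqrt (2 * π * (t ^ 2 / u ^ 2) ^ 3) = Real.sqrt (2 * π) * (t ^ 3 / u ^ 3) := by
      rw [show 2 * π * (t ^ 2 / u ^ 2) ^ 3 = (2 * π) * (t ^ 3 / u ^ 3) ^ 2 by ring,
        Real.sqrt_mul (by positivity), Real.sqrt_sq (by positivity)]
    have hexp : Real.exp (-(t ^ 2 / (t ^ 2 / u ^ 2) + c ^ 2 * (t ^ 2 / u ^ 2)) / 2)
        = Real.exp (-(t * c)) * Real.exp (-(u - t * c / u) ^ 2 / 2) := by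
      rw [← Real.exp_add]
      congr 1
      field_simp
      ring
    rw [smul_eq_mul, abs_neg, abs_of_pos (by positivity : (0:ℝ) < 2 * t ^ 2 / u ^ 3), hg]
    simp only
    rw [hsqrt, hexp]
    field_simp
  constructor
  · rw [show Ioi (0:ℝ) = (fun u => t ^ 2 / u ^ 2) '' Ioi 0 from (sub_image ht).symm]
    rw [MeasureTheory.integrableOn_image_iff_integrableOn_abs_deriv_smul
      measurableSet_Ioi (sub_deriv ht) (sub_inj ht) g]
    apply IntegrableOn.congr_fun _ (fun u hu => (hptw u hu).symm) measurableSet_Ioi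
    exact hI.1.const_mul _
  · have key := MeasureTheory.integral_image_eq_integral_abs_deriv_smul
      measurableSet_Ioi (sub_deriv ht) (sub_inj ht) g
    rw [sub_image ht] at key
    rw [key, setIntegral_congr_fun measurableSet_Ioi hptw, integral_const_mul, hI.2]
    field_simp

open scoped RealInnerProductSpace

lemma F_fun_eq (ξ : EuclideanSpace ℝ (Fin 3)) {s : ℝ} (hs : 0 < s) (A : ℝ)
    (x : EuclideanSpace ℝ (Fin 3)) :
    Complex.exp (Complex.I * (⟪ξ, x⟫ : ℝ)) *
        (((2 * π * s) ^ (-(3 / 2 : ℝ)) * Real.exp (-‖x‖ ^ 2 / (2 * s)) * A : ℝ) : ℂ)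
      = (((2 * π * s) ^ (-(3 / 2 : ℝ)) * A : ℝ) : ℂ) *
          Complex.exp (-(((1 / (2 * s) : ℝ)) : ℂ) * (‖x‖ : ℂ) ^ 2
            + Complex.I * (⟪ξ, x⟫ : ℝ)) := by
  have hs0 : (s : ℂ) ≠ 0 := Complex.ofReal_ne_zero.mpr (ne_of_gt hs)
  rw [Complex.exp_add]
  have he : (-(((1 / (2 * s) : ℝ)) : ℂ) * (‖x‖ : ℂ) ^ 2) = ((-‖x‖ ^ 2 / (2 * s) : ℝ) : ℂ) := by
    push_cast
    field_simp
  rw [he, ← Complex.ofReal_exp]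
  push_cast
  ring

lemma integrable_F (ξ : EuclideanSpace ℝ (Fin 3)) {s : ℝ} (hs : 0 < s) (A : ℝ) :
    Integrable (fun x : EuclideanSpace ℝ (Fin 3) =>
      Complex.exp (Complex.I * (⟪ξ, x⟫ : ℝ)) *
        (((2 * π * s) ^ (-(3 / 2 : ℝ)) * Real.exp (-‖x‖ ^ 2 / (2 * s)) * A : ℝ) : ℂ)) := by
  have hbre : (0:ℝ) < (((1 / (2 * s) : ℝ)) : ℂ).re := by
    rw [Complex.ofReal_re]; positivity
  simp only [F_fun_eq ξ hs A]
  exact (GaussianFourier.integrable_cexp_neg_mul_sq_norm_add hbre Complex.I ξ).const_mul _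

lemma inner_x_integral (ξ : EuclideanSpace ℝ (Fin 3)) {s : ℝ} (hs : 0 < s) (A : ℝ) :
    (∫ x : EuclideanSpace ℝ (Fin 3),
        Complex.exp (Complex.I * (⟪ξ, x⟫ : ℝ)) *
          (((2 * π * s) ^ (-(3 / 2 : ℝ)) * Real.exp (-‖x‖ ^ 2 / (2 * s)) * A : ℝ) : ℂ))
      = ((A * Real.exp (-(s * ‖ξ‖ ^ 2) / 2) : ℝ) : ℂ) := by
  have h2πs : (0:ℝ) < 2 * π * s := by positivity
  have hbre : (0:ℝ) < (((1 / (2 * s) : ℝ)) : ℂ).re := by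
    rw [Complex.ofReal_re]; positivity
  simp only [F_fun_eq ξ hs A]
  rw [integral_const_mul, GaussianFourier.integral_cexp_neg_mul_sq_norm_add hbre Complex.I ξ]
  have hfin : Module.finrank ℝ (EuclideanSpace ℝ (Fin 3)) = 3 := finrank_euclideanSpace_fin
  rw [hfin]
  have hπb : ((π : ℂ) / (((1 / (2 * s) : ℝ)) : ℂ)) = ((2 * π * s : ℝ) : ℂ) := by
    have hs0 : (s : ℂ) ≠ 0 := Complex.ofReal_ne_zero.mpr (ne_of_gt hs)
    push_cast
    field_simp
  rw [hπb]
  have hpow : ((2 * π * s : ℝ) : ℂ) ^ (((3:ℕ) : ℂ) / 2) = (((2 * π * s) ^ ((3:ℝ)/2) : ℝ) : ℂ) := by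
    rw [Complex.ofReal_cpow h2πs.le]
    norm_num
  rw [hpow]
  have hexp2 : Complex.I ^ 2 * (‖ξ‖ : ℂ) ^ 2 / (4 * (((1 / (2 * s) : ℝ)) : ℂ))
      = ((-(s * ‖ξ‖ ^ 2) / 2 : ℝ) : ℂ) := by
    have hs0 : (s : ℂ) ≠ 0 := Complex.ofReal_ne_zero.mpr (ne_of_gt hs)
    rw [Complex.I_sq]
    push_cast
    field_simp
    ring
  rw [hexp2, ← Complex.ofReal_exp, ← Complex.ofReal_mul, ← Complex.ofReal_mul]
  rw [Complex.ofReal_inj]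
  have hC : (2 * π * s) ^ (-(3/2:ℝ)) * (2 * π * s) ^ ((3:ℝ)/2) = 1 := by
    rw [← Real.rpow_add h2πs]; norm_num
  linear_combination (A * Real.exp (-(s * ‖ξ‖ ^ 2) / 2)) * hC

lemma norm_x_integral {s : ℝ} (hs : 0 < s) (A : ℝ) :
    (∫ x : EuclideanSpace ℝ (Fin 3),
        (2 * π * s) ^ (-(3 / 2 : ℝ)) * Real.exp (-‖x‖ ^ 2 / (2 * s)) * A) = A := by
  have h2πs : (0:ℝ) < 2 * π * s := by positivity
  have h1 : ∀ x : EuclideanSpace ℝ (Fin 3),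
      (2 * π * s) ^ (-(3 / 2 : ℝ)) * Real.exp (-‖x‖ ^ 2 / (2 * s)) * A
        = ((2 * π * s) ^ (-(3 / 2 : ℝ)) * A) * Real.exp (-(1/(2*s)) * ‖x‖ ^ 2) := by
    intro x
    rw [show -(1/(2*s)) * ‖x‖ ^ 2 = -‖x‖ ^ 2 / (2 * s) by field_simp]
    ring
  simp only [h1]
  rw [integral_const_mul, GaussianFourier.integral_rexp_neg_mul_sq_norm (by positivity : (0:ℝ) < 1/(2*s))]
  rw [finrank_euclideanSpace_fin]
  have hdiv : π / (1/(2*s)) = 2 * π * s := by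
    field_simp
  rw [hdiv]
  have hC : (2 * π * s) ^ (-(3/2:ℝ)) * (2 * π * s) ^ (((3:ℕ):ℝ)/2) = 1 := by
    rw [← Real.rpow_add h2πs]; norm_num
  linear_combination A * hC

lemma relSub_eq (m t : ℝ) : relSubordinatorDensity m t
    = fun s => Real.exp (t * m) * (t / Real.sqrt (2 * π * s ^ 3)
        * Real.exp (-(t ^ 2 / s + m ^ 2 * s) / 2)) := by
  funext s
  unfold relSubordinatorDensity
  ring

lemma relSub_nonneg {m t : ℝ} (ht : 0 ≤ t) (s : ℝ) : 0 ≤ relSubordinatorDensity m t s := by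
  unfold relSubordinatorDensity
  positivity

/-- The characteristic function of the subordinated three-dimensional Gaussian:
`∫_{ℝ³} e^{i ξ·x} P_t(x) dx = exp(−t(√(|ξ|² + m²) − m))` for every `ξ ∈ ℝ³`. -/
theorem characteristic_function_subordinated_gaussian (m t : ℝ) (hm : 0 ≤ m) (ht : 0 < t)
    (ξ : EuclideanSpace ℝ (Fin 3)) :
    ∫ x : EuclideanSpace ℝ (Fin 3),
        Complex.exp (Complex.I * (⟪ξ, x⟫ : ℝ)) * (subordinatedGaussianDensity m t x : ℂ)
      = (Real.exp (-(t * (Real.sqrt (‖ξ‖ ^ 2 + m ^ 2) - m))) : ℂ) := by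
  set c := Real.sqrt (‖ξ‖ ^ 2 + m ^ 2) with hcdef
  have hc : 0 ≤ c := Real.sqrt_nonneg _
  have hc2 : c ^ 2 = ‖ξ‖ ^ 2 + m ^ 2 := Real.sq_sqrt (by positivity)
  set F : EuclideanSpace ℝ (Fin 3) → ℝ → ℂ := fun x s =>
    Complex.exp (Complex.I * (⟪ξ, x⟫ : ℝ)) *
      (((2 * π * s) ^ (-(3 / 2 : ℝ)) * Real.exp (-‖x‖ ^ 2 / (2 * s)) *
        relSubordinatorDensity m t s : ℝ) : ℂ) with hFdef
  have hLHS : ∀ x : EuclideanSpace ℝ (Fin 3),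
      Complex.exp (Complex.I * (⟪ξ, x⟫ : ℝ)) * (subordinatedGaussianDensity m t x : ℂ)
        = ∫ s in Set.Ioi (0:ℝ), F x s := by
    intro x
    rw [subordinatedGaussianDensity, hFdef]
    simp only
    rw [integral_const_mul]
    exact congrArg _ integral_ofReal.symm
  simp only [hLHS]
  have hrelint : IntegrableOn (relSubordinatorDensity m t) (Ioi 0) := by
    rw [relSub_eq m t]
    exact ((laplace_subordinator ht hm).1).const_mul _
  have hnormF : ∀ x : EuclideanSpace ℝ (Fin 3), ∀ s : ℝ, 0 < s →
      ‖F x s‖ = (2 * π * s) ^ (-(3 / 2 : ℝ)) * Real.exp (-‖x‖ ^ 2 / (2 * s)) *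
        relSubordinatorDensity m t s := by
    intro x s hs
    rw [hFdef]
    simp only
    rw [norm_mul, Complex.norm_exp, Complex.norm_real, Real.norm_eq_abs]
    have h1 : (Complex.I * ((⟪ξ, x⟫ : ℝ) : ℂ)).re = 0 := by simp
    rw [h1, Real.exp_zero, one_mul]
    have h2 : (0:ℝ) ≤ (2 * π * s) ^ (-(3 / 2 : ℝ)) * Real.exp (-‖x‖ ^ 2 / (2 * s)) *
        relSubordinatorDensity m t s := by
      have := relSub_nonneg (m := m) ht.le s
      positivity
    exact abs_of_nonneg h2
  have hmeasF : AEStronglyMeasurable (Function.uncurry F)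
      ((volume : Measure (EuclideanSpace ℝ (Fin 3))).prod (volume.restrict (Ioi 0))) := by
    apply Measurable.aestronglyMeasurable
    rw [hFdef]
    simp only [Function.uncurry_def]
    apply Measurable.mul
    · exact Complex.measurable_exp.comp ((Complex.measurable_ofReal.comp
        (Continuous.inner continuous_const continuous_fst).measurable).const_mul Complex.I)
    · apply Complex.measurable_ofReal.comp
      unfold relSubordinatorDensity
      fun_prop
  have hint : Integrable (Function.uncurry F)
      ((volume : Measure (EuclideanSpace ℝ (Fin 3))).prod (volume.restrict (Ioi 0))) := by
    rw [MeasureTheory.integrable_prod_iff' hmeasF]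
    constructor
    · filter_upwards [ae_restrict_mem measurableSet_Ioi] with s hs
      simp only [Function.uncurry_apply_pair, hFdef]
      exact integrable_F ξ hs _
    · apply hrelint.congr
      filter_upwards [ae_restrict_mem measurableSet_Ioi] with s hs
      rw [← norm_x_integral hs (relSubordinatorDensity m t s)]
      apply integral_congr_ae
      apply Filter.Eventually.of_forall
      intro x
      simp only [Function.uncurry_apply_pair]
      exact (hnormF x s hs).symm
  rw [MeasureTheory.integral_integral_swap hint]
  have hinner : ∀ s ∈ Ioi (0:ℝ), (∫ x : EuclideanSpace ℝ (Fin 3), F x s)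
      = ((relSubordinatorDensity m t s * Real.exp (-(s * ‖ξ‖ ^ 2) / 2) : ℝ) : ℂ) := by
    intro s hs
    rw [hFdef]
    simp only
    exact inner_x_integral ξ hs _
  rw [setIntegral_congr_fun measurableSet_Ioi hinner]
  rw [show (∫ s in Ioi (0:ℝ),
        ((relSubordinatorDensity m t s * Real.exp (-(s * ‖ξ‖ ^ 2) / 2) : ℝ) : ℂ))
      = (((∫ s in Ioi (0:ℝ), relSubordinatorDensity m t s * Real.exp (-(s * ‖ξ‖ ^ 2) / 2)) : ℝ) : ℂ)
    from integral_ofReal]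
  have hreal : ∀ s ∈ Ioi (0:ℝ), relSubordinatorDensity m t s * Real.exp (-(s * ‖ξ‖ ^ 2) / 2)
      = Real.exp (t * m) * (t / Real.sqrt (2 * π * s ^ 3)
          * Real.exp (-(t ^ 2 / s + c ^ 2 * s) / 2)) := by
    intro s hs
    unfold relSubordinatorDensity
    rw [show -(t ^ 2 / s + c ^ 2 * s) / 2 = -(t ^ 2 / s + m ^ 2 * s) / 2 + -(s * ‖ξ‖ ^ 2) / 2 by
      rw [hc2]; ring]
    rw [Real.exp_add]
    ring
  rw [setIntegral_congr_fun measurableSet_Ioi hreal, integral_const_mul,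
    (laplace_subordinator ht hc).2, ← Real.exp_add]
  norm_cast
  congr 1
  ring
end

section
/- Let m ≥ 0, t > 0, ξ ∈ ℝ³, z ∈ ℝ, and define p_t(s) = (t e^{tm} / √(2π s³)) · exp(−(t²/s + m² s)/2) for s > 0. Then ∫₀^∞ p_t(s) · e^{−s|ξ|²/2} · (cos z + i e^{−2s} sin z) ds = exp(−t(√(|ξ|² + m²) − m)) cos z + i · exp(−t(√(|ξ|² + 4 + m²) − m)) sin z. (This is the characteristic function E[e^{i ξ·B_{T_t}} e^{i z θ_{T_t}}] of the joint process q_t = (B_{T_t}, θ_{T_t}), where B is three-dimensional Brownian motion, θ_s = (−1)^{N_s} with N a unit-intensity Poisson process, and T the relativistic subordinator, all independent.) -/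
open MeasureTheory

section aux
open Set

private lemma aux_glasser (b : ℝ) (hb : 0 < b) :
    ∫ w in Ioi (0:ℝ), Real.exp (-(w - b / w) ^ 2) = Real.sqrt Real.pi / 2 := by
  set g : ℝ → ℝ := fun w => Real.exp (-(w - b / w) ^ 2) with hg
  have hgmeas : Measurable g := by rw [hg]; fun_prop
  have hgnn : ∀ w, 0 ≤ g w := fun w => Real.exp_nonneg _
  -- derivative data for φ w = w - b / w
  have hφ : ∀ w ∈ Ioi (0:ℝ), HasDerivWithinAt (fun w => w - b / w) (1 + b / w ^ 2) (Ioi 0) w := by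
    intro w hw
    have hw0 : w ≠ 0 := ne_of_gt hw
    have hb' : HasDerivAt (fun x : ℝ => b / x) (-(b / w ^ 2)) w := by
      simpa [div_eq_mul_inv, mul_comm, mul_neg, neg_mul] using (hasDerivAt_inv hw0).const_mul b
    have : HasDerivAt (fun w : ℝ => w - b / w) (1 + b / w ^ 2) w := by
      exact ((hasDerivAt_id' w).sub hb').congr_deriv (by ring)
    exact this.hasDerivWithinAt
  have hφinj : InjOn (fun w : ℝ => w - b / w) (Ioi 0) := by
    have : StrictMonoOn (fun w : ℝ => w - b / w) (Ioi 0) := by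
      intro x hx y hy hxy
      have hx0 : (0:ℝ) < x := hx
      have hy0 : (0:ℝ) < y := hy
      have h1 : b / y < b / x := by gcongr
      simp only
      linarith
    exact this.injOn
  have hφim : (fun w : ℝ => w - b / w) '' (Ioi 0) = univ := by
    apply eq_univ_of_forall
    intro u
    have h4b : (0:ℝ) < u ^ 2 + 4 * b := by positivity
    set r := Real.sqrt (u ^ 2 + 4 * b) with hr
    have hr2 : r ^ 2 = u ^ 2 + 4 * b := Real.sq_sqrt h4b.le
    have hrnn : 0 ≤ r := Real.sqrt_nonneg _
    have hru : -u < r := by nlinarith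
    have hwpos : (0:ℝ) < (u + r) / 2 := by linarith
    refine ⟨(u + r) / 2, hwpos, ?_⟩
    have hur : (0:ℝ) < u + r := by linarith
    field_simp [ne_of_gt hur]
    nlinarith [hr2]
  -- the gaussian integral over ℝ
  have hgauss : ∫ x : ℝ, Real.exp (-x ^ 2) = Real.sqrt Real.pi := by
    simpa using integral_gaussian 1
  have hint_univ : Integrable (fun x : ℝ => Real.exp (-x ^ 2)) := by
    simpa using integrable_exp_neg_mul_sq (one_pos (α := ℝ))
  have key1 : Real.sqrt Real.pi = ∫ w in Ioi (0:ℝ), |1 + b / w ^ 2| * g w := by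
    rw [← hgauss, ← setIntegral_univ, ← hφim,
      integral_image_eq_integral_abs_deriv_smul measurableSet_Ioi hφ hφinj]
    simp [smul_eq_mul, g]
  have hInt : IntegrableOn (fun w => |1 + b / w ^ 2| * g w) (Ioi 0) := by
    have := (integrableOn_image_iff_integrableOn_abs_deriv_smul measurableSet_Ioi hφ hφinj
      (fun x => Real.exp (-x ^ 2))).mp (by rw [hφim]; exact hint_univ.integrableOn)
    simpa [smul_eq_mul, g] using this
  have hb1 : IntegrableOn g (Ioi 0) := by
    refine Integrable.mono hInt (hgmeas.aestronglyMeasurable.restrict) ?_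
    refine (ae_restrict_iff' measurableSet_Ioi).2 (ae_of_all _ fun w hw => ?_)
    have hw0 : (0:ℝ) < w := hw
    have h1 : (0:ℝ) ≤ b / w ^ 2 := by positivity
    rw [Real.norm_eq_abs, Real.norm_eq_abs, abs_of_nonneg (hgnn w), abs_mul, abs_abs,
      abs_of_nonneg (hgnn w), abs_of_nonneg (by linarith : (0:ℝ) ≤ 1 + b / w ^ 2)]
    nlinarith [hgnn w]
  have hb2 : IntegrableOn (fun w => b / w ^ 2 * g w) (Ioi 0) := by
    refine Integrable.mono hInt ?_ ?_
    · exact ((measurable_const.div (measurable_id.pow_const 2)).mul hgmeas).aestronglyMeasurable.restrict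
    refine (ae_restrict_iff' measurableSet_Ioi).2 (ae_of_all _ fun w hw => ?_)
    have hw0 : (0:ℝ) < w := hw
    have h1 : (0:ℝ) ≤ b / w ^ 2 := by positivity
    rw [Real.norm_eq_abs, Real.norm_eq_abs, abs_mul, abs_of_nonneg (hgnn w), abs_mul, abs_abs,
      abs_of_nonneg (hgnn w), abs_of_nonneg h1,
      abs_of_nonneg (by linarith : (0:ℝ) ≤ 1 + b / w ^ 2)]
    nlinarith [hgnn w]
  -- substitution w ↦ b / w shows the two pieces have the same integral
  have hJ : ∫ w in Ioi (0:ℝ), b / w ^ 2 * g w = ∫ w in Ioi (0:ℝ), g w := by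
    have him2 : (fun w : ℝ => b / w) '' (Ioi 0) = Ioi 0 := by
      ext x
      simp only [mem_image, mem_Ioi]
      constructor
      · rintro ⟨w, hw, rfl⟩; exact div_pos hb hw
      · intro hx; exact ⟨b / x, div_pos hb hx, by field_simp⟩
    have hψ : ∀ w ∈ Ioi (0:ℝ), HasDerivWithinAt (fun w : ℝ => b / w) (-(b / w ^ 2)) (Ioi 0) w := by
      intro w hw
      have hw0 : w ≠ 0 := ne_of_gt hw
      exact (by simpa [div_eq_mul_inv, mul_comm, mul_neg, neg_mul] using
        (hasDerivAt_inv hw0).const_mul b : HasDerivAt (fun x : ℝ => b / x)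
          (-(b / w ^ 2)) w).hasDerivWithinAt
    have hψinj : InjOn (fun w : ℝ => b / w) (Ioi 0) := by
      intro x hx y hy hxy
      have hx0 : (0:ℝ) < x := hx
      have hy0 : (0:ℝ) < y := hy
      simp only at hxy
      rw [div_eq_div_iff (ne_of_gt hx0) (ne_of_gt hy0)] at hxy
      exact (mul_left_cancel₀ (ne_of_gt hb) hxy).symm
    calc ∫ w in Ioi (0:ℝ), b / w ^ 2 * g w
        = ∫ w in Ioi (0:ℝ), |(-(b / w ^ 2))| • g (b / w) := by
          refine setIntegral_congr_fun measurableSet_Ioi fun w hw => ?_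
          have hw0 : (0:ℝ) < w := hw
          have hbw : b / (b / w) = w := by field_simp
          have : g (b / w) = g w := by
            simp only [g, hbw]
            congr 1
            ring
          rw [this, smul_eq_mul, abs_neg, abs_of_nonneg (by positivity : (0:ℝ) ≤ b / w ^ 2)]
      _ = ∫ x in (fun w : ℝ => b / w) '' (Ioi 0), g x :=
          (integral_image_eq_integral_abs_deriv_smul measurableSet_Ioi hψ hψinj g).symm
      _ = ∫ w in Ioi (0:ℝ), g w := by rw [him2]
  have key2 : ∫ w in Ioi (0:ℝ), |1 + b / w ^ 2| * g w
      = (∫ w in Ioi (0:ℝ), g w) + ∫ w in Ioi (0:ℝ), b / w ^ 2 * g w := by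
    rw [← integral_add hb1 hb2]
    refine setIntegral_congr_fun measurableSet_Ioi fun w hw => ?_
    have hw0 : (0:ℝ) < w := hw
    rw [abs_of_nonneg (by positivity : (0:ℝ) ≤ 1 + b / w ^ 2)]
    ring
  have := key1
  rw [key2, hJ] at this
  linarith

private lemma aux_gauss2 (c : ℝ) (hc : 0 ≤ c) :
    ∫ w in Ioi (0:ℝ), Real.exp (-w ^ 2 - c ^ 2 / w ^ 2)
      = Real.sqrt Real.pi / 2 * Real.exp (-(2 * c)) := by
  rcases eq_or_lt_of_le hc with hc0 | hc0
  · simp only [← hc0, ne_eq, zero_pow, zero_div, sub_zero, mul_zero, neg_zero, Real.exp_zero,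
      mul_one]
    have := integral_gaussian_Ioi 1
    simpa using this
  · have : ∫ w in Ioi (0:ℝ), Real.exp (-w ^ 2 - c ^ 2 / w ^ 2)
        = ∫ w in Ioi (0:ℝ), Real.exp (-(2 * c)) * Real.exp (-(w - c / w) ^ 2) := by
      refine setIntegral_congr_fun measurableSet_Ioi fun w hw => ?_
      have hw0 : (0:ℝ) < w := hw
      rw [← Real.exp_add]
      congr 1
      have h1 : (w - c / w) ^ 2 = w ^ 2 - 2 * c + c ^ 2 / w ^ 2 := by
        field_simp
        ring
      rw [h1]
      ring
    rw [this, MeasureTheory.integral_const_mul, aux_glasser c hc0]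
    ring

private noncomputable def auxKernel (t a s : ℝ) : ℝ :=
  t / Real.sqrt (2 * Real.pi * s ^ 3) * Real.exp (-(t ^ 2 / s + a ^ 2 * s) / 2)

private lemma aux_deriv (t : ℝ) :
    ∀ w ∈ Ioi (0:ℝ), HasDerivWithinAt (fun w : ℝ => t ^ 2 / (2 * w ^ 2))
      (-(t ^ 2 / w ^ 3)) (Ioi 0) w := by
  intro w hw
  have hw0 : (0:ℝ) < w := hw
  have hd : HasDerivAt (fun w : ℝ => 2 * w ^ 2) (2 * (2 * w)) w := by
    simpa [mul_comm] using (hasDerivAt_pow 2 w).const_mul 2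
  have h := (hasDerivAt_const w (t ^ 2)).div hd (by positivity)
  have : HasDerivAt (fun w : ℝ => t ^ 2 / (2 * w ^ 2)) (-(t ^ 2 / w ^ 3)) w := by
    refine h.congr_deriv ?_
    field_simp
    ring
  exact this.hasDerivWithinAt

private lemma aux_inj (t : ℝ) (ht : 0 < t) :
    InjOn (fun w : ℝ => t ^ 2 / (2 * w ^ 2)) (Ioi 0) := by
  have : StrictAntiOn (fun w : ℝ => t ^ 2 / (2 * w ^ 2)) (Ioi 0) := by
    intro x hx y hy hxy
    have hx0 : (0:ℝ) < x := hx
    have hy0 : (0:ℝ) < y := hy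
    simp only
    have hxy2 : x ^ 2 < y ^ 2 := by nlinarith
    gcongr
  exact this.injOn

private lemma aux_image (t : ℝ) (ht : 0 < t) :
    (fun w : ℝ => t ^ 2 / (2 * w ^ 2)) '' (Ioi 0) = Ioi 0 := by
  ext s
  simp only [mem_image, mem_Ioi]
  constructor
  · rintro ⟨w, hw, rfl⟩
    positivity
  · intro hs
    have h2s : (0:ℝ) < 2 * s := by linarith
    refine ⟨t / Real.sqrt (2 * s), by positivity, ?_⟩
    have hsq : Real.sqrt (2 * s) ^ 2 = 2 * s := Real.sq_sqrt h2s.le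
    rw [div_pow, hsq]
    field_simp

private lemma aux_eqOn (t a : ℝ) (ht : 0 < t) :
    EqOn (fun w : ℝ => |(-(t ^ 2 / w ^ 3))| • auxKernel t a (t ^ 2 / (2 * w ^ 2)))
      (fun w : ℝ => 2 / Real.sqrt Real.pi * Real.exp (-w ^ 2 - (a * t / 2) ^ 2 / w ^ 2))
      (Ioi 0) := by
  intro w hw
  have hw0 : (0:ℝ) < w := hw
  have hπ : (0:ℝ) < Real.sqrt Real.pi := Real.sqrt_pos.mpr Real.pi_pos
  simp only [auxKernel, smul_eq_mul]
  have h5 : 2 * Real.pi * (t ^ 2 / (2 * w ^ 2)) ^ 3 = (t ^ 3 / (2 * w ^ 3)) ^ 2 * Real.pi := by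
    field_simp
  rw [h5, Real.sqrt_mul (sq_nonneg _) Real.pi, Real.sqrt_sq (by positivity)]
  have h6 : -(t ^ 2 / (t ^ 2 / (2 * w ^ 2)) + a ^ 2 * (t ^ 2 / (2 * w ^ 2))) / 2
      = -w ^ 2 - (a * t / 2) ^ 2 / w ^ 2 := by
    field_simp
    ring
  rw [h6, abs_neg, abs_of_nonneg (by positivity : (0:ℝ) ≤ t ^ 2 / w ^ 3)]
  field_simp

private lemma aux_key (t a : ℝ) (ht : 0 < t) (ha : 0 ≤ a) :
    ∫ s in Ioi (0:ℝ), auxKernel t a s = Real.exp (-(t * a)) := by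
  have hπ : (0:ℝ) < Real.sqrt Real.pi := Real.sqrt_pos.mpr Real.pi_pos
  rw [← aux_image t ht,
    integral_image_eq_integral_abs_deriv_smul measurableSet_Ioi (aux_deriv t) (aux_inj t ht),
    setIntegral_congr_fun measurableSet_Ioi (aux_eqOn t a ht),
    MeasureTheory.integral_const_mul, aux_gauss2 (a * t / 2) (by positivity)]
  rw [show -(2 * (a * t / 2)) = -(t * a) by ring]
  field_simp

private lemma aux_key_int (t a : ℝ) (ht : 0 < t) (ha : 0 ≤ a) :
    IntegrableOn (fun s => auxKernel t a s) (Ioi 0) := by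
  have hπ : (0:ℝ) < Real.sqrt Real.pi := Real.sqrt_pos.mpr Real.pi_pos
  set c := a * t / 2 with hc
  have hdom : IntegrableOn (fun w : ℝ => 2 / Real.sqrt Real.pi * Real.exp (-(1:ℝ) * w ^ 2))
      (Ioi 0) := (integrableOn_Ioi_exp_neg_mul_sq_iff.mpr one_pos).const_mul _
  have hbase : IntegrableOn (fun w : ℝ => 2 / Real.sqrt Real.pi *
      Real.exp (-w ^ 2 - c ^ 2 / w ^ 2)) (Ioi 0) := by
    refine Integrable.mono hdom ?_ (ae_of_all _ fun w => ?_)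
    · exact ((measurable_const.mul ((measurable_id.pow_const 2).neg.sub
        (measurable_const.div (measurable_id.pow_const 2))).exp)).aestronglyMeasurable.restrict
    · have h1 : (0:ℝ) ≤ c ^ 2 / w ^ 2 := by positivity
      have h2 : Real.exp (-w ^ 2 - c ^ 2 / w ^ 2) ≤ Real.exp (-(1:ℝ) * w ^ 2) :=
        Real.exp_le_exp.mpr (by nlinarith)
      rw [Real.norm_eq_abs, Real.norm_eq_abs, abs_of_nonneg (by positivity),
        abs_of_nonneg (by positivity)]
      have h3 : (0:ℝ) ≤ 2 / Real.sqrt Real.pi := by positivity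
      exact mul_le_mul_of_nonneg_left h2 h3
  have h_rhs : IntegrableOn
      (fun w : ℝ => |(-(t ^ 2 / w ^ 3))| • auxKernel t a (t ^ 2 / (2 * w ^ 2))) (Ioi 0) :=
    hbase.congr_fun (aux_eqOn t a ht).symm measurableSet_Ioi
  have := (integrableOn_image_iff_integrableOn_abs_deriv_smul measurableSet_Ioi (aux_deriv t)
    (aux_inj t ht) (fun s => auxKernel t a s)).mpr h_rhs
  rwa [aux_image t ht] at this

end aux

/-- The characteristic function `E[e^{i ξ·B_{T_t}} e^{i z θ_{T_t}}]` of the joint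
process `q_t = (B_{T_t}, θ_{T_t})` (with `B` three-dimensional Brownian motion,
`θ_s = (−1)^{N_s}` for a unit-intensity Poisson process `N`, and `T` the relativistic
subordinator, all independent), computed by conditioning on `T_t = s`:
`∫₀^∞ p_t(s) e^{−s|ξ|²/2} (cos z + i e^{−2s} sin z) ds
  = e^{−t(√(|ξ|²+m²)−m)} cos z + i e^{−t(√(|ξ|²+4+m²)−m)} sin z`. -/
theorem characteristic_function_joint_process (m t : ℝ) (hm : 0 ≤ m) (ht : 0 < t)
    (ξ : EuclideanSpace ℝ (Fin 3)) (z : ℝ) :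
    ∫ s in Set.Ioi (0 : ℝ),
        ((relSubordinatorDensity m t s * Real.exp (-(s * ‖ξ‖ ^ 2) / 2) : ℝ) : ℂ) *
          ((Real.cos z : ℂ) + Complex.I * (Real.exp (-(2 * s)) : ℂ) * (Real.sin z : ℂ))
      = ((Real.exp (-(t * (Real.sqrt (‖ξ‖ ^ 2 + m ^ 2) - m))) * Real.cos z : ℝ) : ℂ)
          + Complex.I *
            ((Real.exp (-(t * (Real.sqrt (‖ξ‖ ^ 2 + 4 + m ^ 2) - m))) * Real.sin z : ℝ) : ℂ) := by

  set a1 := Real.sqrt (‖ξ‖ ^ 2 + m ^ 2) with ha1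
  set a2 := Real.sqrt (‖ξ‖ ^ 2 + 4 + m ^ 2) with ha2
  have ha1nn : 0 ≤ a1 := Real.sqrt_nonneg _
  have ha2nn : 0 ≤ a2 := Real.sqrt_nonneg _
  have ha1sq : a1 ^ 2 = ‖ξ‖ ^ 2 + m ^ 2 := Real.sq_sqrt (by positivity)
  have ha2sq : a2 ^ 2 = ‖ξ‖ ^ 2 + 4 + m ^ 2 := Real.sq_sqrt (by positivity)
  -- pointwise identification of the integrand
  have hEq : Set.EqOn
      (fun s : ℝ => ((relSubordinatorDensity m t s * Real.exp (-(s * ‖ξ‖ ^ 2) / 2) : ℝ) : ℂ) *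
          ((Real.cos z : ℂ) + Complex.I * (Real.exp (-(2 * s)) : ℂ) * (Real.sin z : ℂ)))
      (fun s : ℝ => ((Real.cos z * Real.exp (t * m) * auxKernel t a1 s : ℝ) : ℂ)
          + Complex.I * ((Real.sin z * Real.exp (t * m) * auxKernel t a2 s : ℝ) : ℂ))
      (Set.Ioi 0) := by
    intro s hs
    have hs0 : (0:ℝ) < s := hs
    have hre : Real.exp (t * m) * auxKernel t a1 s
        = relSubordinatorDensity m t s * Real.exp (-(s * ‖ξ‖ ^ 2) / 2) := by
      unfold relSubordinatorDensity auxKernel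
      have hexp : Real.exp (-(t ^ 2 / s + m ^ 2 * s) / 2) * Real.exp (-(s * ‖ξ‖ ^ 2) / 2)
          = Real.exp (-(t ^ 2 / s + a1 ^ 2 * s) / 2) := by
        rw [← Real.exp_add]; congr 1; rw [ha1sq]; ring
      rw [← hexp]; ring
    have him : Real.exp (t * m) * auxKernel t a2 s
        = relSubordinatorDensity m t s * Real.exp (-(s * ‖ξ‖ ^ 2) / 2) * Real.exp (-(2 * s)) := by
      unfold relSubordinatorDensity auxKernel
      have hexp : Real.exp (-(t ^ 2 / s + m ^ 2 * s) / 2) * Real.exp (-(s * ‖ξ‖ ^ 2) / 2)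
            * Real.exp (-(2 * s))
          = Real.exp (-(t ^ 2 / s + a2 ^ 2 * s) / 2) := by
        rw [← Real.exp_add, ← Real.exp_add]; congr 1; rw [ha2sq]; ring
      rw [← hexp]; ring
    simp only
    rw [show Real.cos z * Real.exp (t * m) * auxKernel t a1 s
        = Real.cos z * (Real.exp (t * m) * auxKernel t a1 s) from by ring,
      show Real.sin z * Real.exp (t * m) * auxKernel t a2 s
        = Real.sin z * (Real.exp (t * m) * auxKernel t a2 s) from by ring,
      hre, him]
    push_cast
    ring
  rw [setIntegral_congr_fun measurableSet_Ioi hEq]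
  have hi1 : IntegrableOn
      (fun s : ℝ => ((Real.cos z * Real.exp (t * m) * auxKernel t a1 s : ℝ) : ℂ))
      (Set.Ioi 0) := by
    exact ((aux_key_int t a1 ht ha1nn).const_mul (Real.cos z * Real.exp (t * m))).ofReal (𝕜 := ℂ)
  have hi2 : IntegrableOn
      (fun s : ℝ => Complex.I * ((Real.sin z * Real.exp (t * m) * auxKernel t a2 s : ℝ) : ℂ))
      (Set.Ioi 0) := by
    refine Integrable.const_mul ?_ Complex.I
    exact ((aux_key_int t a2 ht ha2nn).const_mul (Real.sin z * Real.exp (t * m))).ofReal (𝕜 := ℂ)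
  have hio1 : ∫ s in Set.Ioi (0:ℝ), ((Real.cos z * Real.exp (t * m) * auxKernel t a1 s : ℝ) : ℂ)
      = ((∫ s in Set.Ioi (0:ℝ), Real.cos z * Real.exp (t * m) * auxKernel t a1 s : ℝ) : ℂ) :=
    integral_ofReal
  have hio2 : ∫ s in Set.Ioi (0:ℝ), ((Real.sin z * Real.exp (t * m) * auxKernel t a2 s : ℝ) : ℂ)
      = ((∫ s in Set.Ioi (0:ℝ), Real.sin z * Real.exp (t * m) * auxKernel t a2 s : ℝ) : ℂ) :=
    integral_ofReal
  rw [integral_add hi1 hi2, MeasureTheory.integral_const_mul Complex.I, hio1, hio2,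
    MeasureTheory.integral_const_mul, MeasureTheory.integral_const_mul,
    aux_key t a1 ht ha1nn, aux_key t a2 ht ha2nn]
  have e1 : Real.cos z * Real.exp (t * m) * Real.exp (-(t * a1))
      = Real.exp (-(t * (a1 - m))) * Real.cos z := by
    rw [mul_assoc, ← Real.exp_add, show t * m + -(t * a1) = -(t * (a1 - m)) by ring]
    ring
  have e2 : Real.sin z * Real.exp (t * m) * Real.exp (-(t * a2))
      = Real.exp (-(t * (a2 - m))) * Real.sin z := by
    rw [mul_assoc, ← Real.exp_add, show t * m + -(t * a2) = -(t * (a2 - m)) by ring]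
    ring
  rw [e1, e2]
end

section
/- Let (Ω₁, F₁, P₁) and (Ω₂, F₂, P₂) be probability spaces and let P = P₁ ⊗ P₂ be the product measure on Ω₁ × Ω₂. For each ω₂ ∈ Ω₂ let G(ω₂) ⊆ F₁ be a sub-σ-algebra, and define G = { A ∈ F₁ ⊗ F₂ : for every ω₂ ∈ Ω₂, the section {ω₁ : (ω₁,ω₂) ∈ A} belongs to G(ω₂) }; then G is a sub-σ-algebra of F₁ ⊗ F₂. Suppose Y : Ω₁ × Ω₂ → ℝ is P-integrable and Z : Ω₁ × Ω₂ → ℝ is G-measurable, P-integrable, and for P₂-almost every ω₂ the function Z(·, ω₂) is a version of the conditional expectation of Y(·, ω₂) given G(ω₂) under P₁ (i.e. Z(·,ω₂) is G(ω₂)-measurable and ∫_A Z(ω₁,ω₂) dP₁(ω₁) = ∫_A Y(ω₁,ω₂) dP₁(ω₁) for all A ∈ G(ω₂)). Then Z is a version of the conditional expectation E_P[Y | G]. -/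
open MeasureTheory

/-- Given a family `G ω₂` of sub-σ-algebras of `Ω₁` indexed by `ω₂ ∈ Ω₂`, the
σ-algebra on `Ω₁ × Ω₂` of all product-measurable sets `A` such that for every `ω₂`
the section `{ω₁ | (ω₁,ω₂) ∈ A}` belongs to `G ω₂`. -/
def sectionSigmaAlgebra {Ω₁ Ω₂ : Type*} [MeasurableSpace Ω₁] [MeasurableSpace Ω₂]
    (G : Ω₂ → MeasurableSpace Ω₁) : MeasurableSpace (Ω₁ × Ω₂) :=
  (inferInstance : MeasurableSpace (Ω₁ × Ω₂)) ⊓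
    ⨅ ω₂ : Ω₂, MeasurableSpace.map (fun ω₁ => (ω₁, ω₂)) (G ω₂)

/-- Let `P = P₁ ⊗ P₂` be a product probability measure and `G` the σ-algebra on
`Ω₁ × Ω₂` whose members are the product-measurable sets all of whose `ω₂`-sections
belong to `G(ω₂)`. If `Y` is `P`-integrable and `Z` is `G`-measurable, `P`-integrable,
and for `P₂`-a.e. `ω₂` the function `Z(·,ω₂)` is a version of the conditional
expectation of `Y(·,ω₂)` given `G(ω₂)` under `P₁`, then `Z` is a version of the
conditional expectation `E_P[Y | G]`. -/
theorem condexp_of_sectionwise_condexp {Ω₁ Ω₂ : Type*}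
    [MeasurableSpace Ω₁] [MeasurableSpace Ω₂]
    (P₁ : Measure Ω₁) (P₂ : Measure Ω₂)
    [IsProbabilityMeasure P₁] [IsProbabilityMeasure P₂]
    (G : Ω₂ → MeasurableSpace Ω₁) (hG : ∀ ω₂, G ω₂ ≤ ‹MeasurableSpace Ω₁›)
    (Y Z : Ω₁ × Ω₂ → ℝ)
    (hY : Integrable Y (P₁.prod P₂))
    (hZmeas : Measurable[sectionSigmaAlgebra G] Z)
    (hZint : Integrable Z (P₁.prod P₂))
    (hsec : ∀ᵐ ω₂ ∂P₂,
      Measurable[G ω₂] (fun ω₁ => Z (ω₁, ω₂)) ∧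
      ∀ A : Set Ω₁, MeasurableSet[G ω₂] A →
        ∫ ω₁ in A, Z (ω₁, ω₂) ∂P₁ = ∫ ω₁ in A, Y (ω₁, ω₂) ∂P₁) :
    (∀ A : Set (Ω₁ × Ω₂),
      MeasurableSet[sectionSigmaAlgebra G] A ↔
        MeasurableSet A ∧ ∀ ω₂ : Ω₂, MeasurableSet[G ω₂] {ω₁ : Ω₁ | (ω₁, ω₂) ∈ A}) ∧
    Z =ᵐ[P₁.prod P₂] (P₁.prod P₂)[Y | sectionSigmaAlgebra G] := by
  have hmem : ∀ A : Set (Ω₁ × Ω₂),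
      MeasurableSet[sectionSigmaAlgebra G] A ↔
        MeasurableSet A ∧ ∀ ω₂ : Ω₂, MeasurableSet[G ω₂] {ω₁ : Ω₁ | (ω₁, ω₂) ∈ A} := by
    intro A
    rw [sectionSigmaAlgebra, MeasurableSpace.measurableSet_inf,
      MeasurableSpace.measurableSet_iInf]
    rfl
  refine ⟨hmem, ?_⟩
  have hle : sectionSigmaAlgebra G ≤ (inferInstance : MeasurableSpace (Ω₁ × Ω₂)) :=
    inf_le_left
  haveI : SigmaFinite ((P₁.prod P₂).trim hle) :=
    (isFiniteMeasure_trim hle).toSigmaFinite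
  refine ae_eq_condExp_of_forall_setIntegral_eq hle hY
    (fun s _ _ => hZint.integrableOn) ?_
    ((hZmeas.stronglyMeasurable).aestronglyMeasurable)
  intro s hs _
  obtain ⟨hsm, hssec⟩ := (hmem s).mp hs
  -- rewrite both set integrals over the product as iterated integrals
  have key : ∀ (W : Ω₁ × Ω₂ → ℝ), Integrable W (P₁.prod P₂) →
      ∫ x in s, W x ∂(P₁.prod P₂)
        = ∫ ω₂, ∫ ω₁ in {ω₁ : Ω₁ | (ω₁, ω₂) ∈ s}, W (ω₁, ω₂) ∂P₁ ∂P₂ := by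
    intro W hW
    rw [← integral_indicator hsm]
    rw [MeasureTheory.integral_prod_symm _ (hW.indicator hsm)]
    refine integral_congr_ae (Filter.Eventually.of_forall fun ω₂ => ?_)
    have hsecm : MeasurableSet {ω₁ : Ω₁ | (ω₁, ω₂) ∈ s} :=
      hG ω₂ _ (hssec ω₂)
    show ∫ ω₁, s.indicator W (ω₁, ω₂) ∂P₁
      = ∫ ω₁ in {ω₁ : Ω₁ | (ω₁, ω₂) ∈ s}, W (ω₁, ω₂) ∂P₁
    rw [← integral_indicator hsecm]
    refine integral_congr_ae (Filter.Eventually.of_forall fun ω₁ => ?_)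
    by_cases h : (ω₁, ω₂) ∈ s
    · simp only [Set.indicator, h, Set.mem_setOf_eq, if_true]
    · simp only [Set.indicator, h, Set.mem_setOf_eq, if_false]
  rw [key Z hZint, key Y hY]
  refine integral_congr_ae ?_
  filter_upwards [hsec] with ω₂ hω₂
  exact hω₂.2 _ (hssec ω₂)
end
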